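/- Let (α_n, β_n)_{n≥0} be a stationary and ergodic sequence of pairs of non-negative random variables. If E[log α_0] < 0 and E[log⁺ β_0] < ∞, then the series ∑_{n=0}^∞ α_0·α_1···α_{n-1}·β_n converges almost surely. -/

import Mathlib

open MeasureTheory Filter
open scoped ENNReal Topology NNReal

section Aux

variable {Ω : Type*} [MeasurableSpace Ω] {μ : Measure Ω}

private lemma integrable_comp_mp {T : Ω → Ω} {f : Ω → ℝ} (hT : MeasurePreserving T μ μ)
    (hf : Integrable f μ) : Integrable (fun x => f (T x)) μ :=
  memLp_one_iff_integrable.1 ((memLp_one_iff_integrable.2 hf).comp_measurePreserving hT)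

private lemma integral_comp_mp {T : Ω → Ω} {f : Ω → ℝ} (hT : MeasurePreserving T μ μ)
    (hf : AEStronglyMeasurable f μ) : ∫ x, f (T x) ∂μ = ∫ x, f x ∂μ := by
  have h1 : ∫ x, f (T x) ∂μ = ∫ y, f y ∂(Measure.map T μ) :=
    (integral_map hT.aemeasurable (by rwa [hT.map_eq])).symm
  rw [h1, hT.map_eq]

private lemma birkhoff_measurable {T : Ω → Ω} {f : Ω → ℝ} (hT : Measurable T)
    (hf : Measurable f) (n : ℕ) : Measurable (birkhoffSum T f n) := by
  unfold birkhoffSum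
  exact Finset.measurable_sum _ fun i _ => hf.comp (hT.iterate i)

/-- Combinatorial core: if at every point some Birkhoff sum of length between 1 and `N`
is nonnegative, then all Birkhoff sums are bounded below by the (negative) sum of `|f|`
over the last at most `N` points of the orbit. -/
private lemma birkhoff_lower_bound (T : Ω → Ω) (f : Ω → ℝ) (N : ℕ)
    (H : ∀ ω, ∃ m, 1 ≤ m ∧ m ≤ N ∧ 0 ≤ birkhoffSum T f m ω) :
    ∀ L ω, -(∑ i ∈ Finset.Ico (L - N) L, |f (T^[i] ω)|) ≤ birkhoffSum T f L ω := by
  intro L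
  induction L using Nat.strong_induction_on with
  | _ L IH =>
    intro ω
    rcases Nat.eq_zero_or_pos L with h0 | hL
    · subst h0; simp
    obtain ⟨m, hm1, hmN, hm0⟩ := H ω
    by_cases hmL : m ≤ L
    · have hdec : birkhoffSum T f L ω
          = birkhoffSum T f m ω + birkhoffSum T f (L - m) (T^[m] ω) := by
        conv_lhs => rw [show L = m + (L - m) by omega]
        exact birkhoffSum_add T f m (L - m) ω
      have hIH := IH (L - m) (by omega) (T^[m] ω)
      have hrw : (∑ i ∈ Finset.Ico (L - m - N) (L - m), |f (T^[i] (T^[m] ω))|)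
          = ∑ j ∈ Finset.Ico (L - m - N + m) L, |f (T^[j] ω)| := by
        rw [Finset.sum_Ico_eq_sum_range, Finset.sum_Ico_eq_sum_range]
        have hcard : L - (L - m - N + m) = L - m - (L - m - N) := by omega
        rw [hcard]
        refine Finset.sum_congr rfl fun i _ => ?_
        rw [← Function.iterate_add_apply]
        have hidx : L - m - N + i + m = L - m - N + m + i := by omega
        rw [hidx]
      have hsub : (∑ j ∈ Finset.Ico (L - m - N + m) L, |f (T^[j] ω)|)
          ≤ ∑ j ∈ Finset.Ico (L - N) L, |f (T^[j] ω)| := by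
        refine Finset.sum_le_sum_of_subset_of_nonneg
          (Finset.Ico_subset_Ico (by omega) le_rfl) fun j _ _ => abs_nonneg _
      rw [hrw] at hIH
      linarith
    · have hLN : L - N = 0 := by omega
      rw [hLN]
      have h1 : -(∑ i ∈ Finset.Ico 0 L, |f (T^[i] ω)|)
          = ∑ i ∈ Finset.Ico 0 L, -|f (T^[i] ω)| := by
        rw [Finset.sum_neg_distrib]
      rw [h1]
      have : birkhoffSum T f L ω = ∑ i ∈ Finset.Ico 0 L, f (T^[i] ω) := by
        rw [← Finset.range_eq_Ico]; rfl
      rw [this]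
      exact Finset.sum_le_sum fun i _ => neg_abs_le _

/-- Maximal-ergodic type estimate, everywhere version. -/
private lemma integral_nonneg_aux [IsProbabilityMeasure μ] {T : Ω → Ω} {f : Ω → ℝ}
    (hT : MeasurePreserving T μ μ) (hfm : Measurable f) (hf : Integrable f μ) (N : ℕ)
    (H : ∀ ω, ∃ m, 1 ≤ m ∧ m ≤ N ∧ 0 ≤ birkhoffSum T f m ω) :
    0 ≤ ∫ ω, f ω ∂μ := by
  by_contra hneg
  push_neg at hneg
  set I := ∫ ω, f ω ∂μ with hI
  set J := ∫ ω, |f ω| ∂μ with hJ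
  have hJ0 : 0 ≤ J := integral_nonneg fun ω => abs_nonneg _
  have key : ∀ L : ℕ, -((N : ℝ) * J) ≤ (L : ℝ) * I := by
    intro L
    have hint1 : Integrable (birkhoffSum T f L) μ := by
      unfold birkhoffSum
      exact integrable_finset_sum _ fun i _ => integrable_comp_mp (hT.iterate i) hf
    have hint2 : Integrable (fun ω => ∑ i ∈ Finset.Ico (L - N) L, |f (T^[i] ω)|) μ :=
      integrable_finset_sum _ fun i _ => integrable_comp_mp (hT.iterate i) hf.abs
    have hI1 : ∫ ω, birkhoffSum T f L ω ∂μ = (L : ℝ) * I := by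
      unfold birkhoffSum
      rw [integral_finset_sum _ fun i _ => integrable_comp_mp (hT.iterate i) hf]
      have : ∀ i ∈ Finset.range L, ∫ ω, f (T^[i] ω) ∂μ = I :=
        fun i _ => integral_comp_mp (hT.iterate i) hf.1
      rw [Finset.sum_congr rfl this, Finset.sum_const, Finset.card_range, nsmul_eq_mul]
    have hI2 : ∫ ω, (∑ i ∈ Finset.Ico (L - N) L, |f (T^[i] ω)|) ∂μ ≤ (N : ℝ) * J := by
      rw [integral_finset_sum _ fun i _ => integrable_comp_mp (hT.iterate i) hf.abs]
      have heq : ∀ i ∈ Finset.Ico (L - N) L, ∫ ω, |f (T^[i] ω)| ∂μ = J :=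
        fun i _ => integral_comp_mp (hT.iterate i) hf.abs.1
      rw [Finset.sum_congr rfl heq, Finset.sum_const, Nat.card_Ico, nsmul_eq_mul]
      have : ((L - (L - N) : ℕ) : ℝ) ≤ (N : ℝ) := by
        exact_mod_cast Nat.sub_le_iff_le_add.2 (by omega)
      exact mul_le_mul_of_nonneg_right this hJ0
    have hmono : ∫ ω, -(∑ i ∈ Finset.Ico (L - N) L, |f (T^[i] ω)|) ∂μ
        ≤ ∫ ω, birkhoffSum T f L ω ∂μ :=
      integral_mono hint2.neg hint1 fun ω => birkhoff_lower_bound T f N H L ω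
    rw [integral_neg, hI1] at hmono
    linarith
  obtain ⟨L, hL⟩ := exists_nat_gt ((N : ℝ) * J / (-I))
  have hIpos : 0 < -I := by linarith
  have h2 : (N : ℝ) * J < (L : ℝ) * (-I) := by
    rwa [div_lt_iff₀ hIpos] at hL
  have h3 := key L
  nlinarith

/-- Maximal-ergodic type estimate, a.e. version: if a.e. point has some nonnegative
Birkhoff sum, then the integral is nonnegative. -/
private lemma integral_nonneg_of_ae [IsProbabilityMeasure μ] {T : Ω → Ω} {f : Ω → ℝ}
    (hT : MeasurePreserving T μ μ) (hfm : Measurable f) (hf : Integrable f μ)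
    (H : ∀ᵐ ω ∂μ, ∃ n, 1 ≤ n ∧ 0 ≤ birkhoffSum T f n ω) :
    0 ≤ ∫ ω, f ω ∂μ := by
  set E : ℕ → Set Ω := fun N => {ω | ∀ n, 1 ≤ n → n ≤ N → birkhoffSum T f n ω < 0} with hE
  have hEm : ∀ N, MeasurableSet (E N) := by
    intro N
    have : E N = ⋂ n ∈ Finset.Icc 1 N, {ω | birkhoffSum T f n ω < 0} := by
      ext ω
      simp only [hE, Set.mem_setOf_eq, Set.mem_iInter, Finset.mem_Icc]
      tauto
    rw [this]
    exact MeasurableSet.biInter (Finset.Icc 1 N).countable_toSet fun n _ =>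
      measurableSet_lt (birkhoff_measurable hT.measurable hfm n) measurable_const
  set g : ℕ → Ω → ℝ := fun N ω => f ω + (E N).indicator (fun ω => |f ω|) ω with hg
  have hg_int : ∀ N, Integrable (g N) μ := fun N =>
    hf.add ((hf.abs).indicator (hEm N))
  have hg_meas : ∀ N, Measurable (g N) := fun N =>
    hfm.add (hfm.abs.indicator (hEm N))
  have hg_ge : ∀ N ω, f ω ≤ g N ω := by
    intro N ω
    simp only [hg, le_add_iff_nonneg_right]
    exact Set.indicator_nonneg (fun ω _ => abs_nonneg _) ω
  have key : ∀ N, 1 ≤ N → 0 ≤ ∫ ω, g N ω ∂μ := by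
    intro N hN
    refine integral_nonneg_aux hT (hg_meas N) (hg_int N) N fun ω => ?_
    by_cases hω : ω ∈ E N
    · refine ⟨1, le_rfl, hN, ?_⟩
      rw [birkhoffSum_one]
      simp only [hg, Set.indicator_of_mem hω]
      have := neg_abs_le (f ω); linarith
    · simp only [hE, Set.mem_setOf_eq] at hω
      push_neg at hω
      obtain ⟨n, h1, h2, h3⟩ := hω
      refine ⟨n, h1, h2, le_trans h3 ?_⟩
      exact Finset.sum_le_sum fun i _ => hg_ge N _
  have hsplit : ∀ N, ∫ ω, g N ω ∂μ
      = (∫ ω, f ω ∂μ) + ∫ ω, (E N).indicator (fun ω => |f ω|) ω ∂μ := fun N =>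
    integral_add hf ((hf.abs).indicator (hEm N))
  have hlim : Tendsto (fun N => ∫ ω, (E N).indicator (fun ω => |f ω|) ω ∂μ)
      atTop (𝓝 0) := by
    have h0 : (0 : ℝ) = ∫ ω, (0 : ℝ) ∂μ := by simp
    rw [h0]
    refine tendsto_integral_of_dominated_convergence (fun ω => |f ω|)
      (fun N => ((hfm.abs.indicator (hEm N)).aestronglyMeasurable)) hf.abs ?_ ?_
    · intro N
      filter_upwards with ω
      rw [Real.norm_eq_abs]
      rcases Set.indicator_eq_zero_or_self (E N) (fun ω => |f ω|) ω with h | h <;>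
        rw [h] <;> simp [abs_nonneg]
    · filter_upwards [H] with ω hω
      obtain ⟨n, hn1, hn0⟩ := hω
      have : ∀ N ≥ n, (E N).indicator (fun ω => |f ω|) ω = 0 := by
        intro N hnN
        apply Set.indicator_of_notMem
        intro hmem
        exact absurd hn0 (not_le.2 (hmem n hn1 hnN))
      exact tendsto_const_nhds.congr' (eventually_atTop.2 ⟨n, fun N hN => (this N hN).symm⟩)
  have htend : Tendsto (fun N => ∫ ω, g N ω ∂μ) atTop (𝓝 (∫ ω, f ω ∂μ)) := by
    simp only [hsplit]
    simpa using tendsto_const_nhds.add hlim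
  exact ge_of_tendsto htend (eventually_atTop.2 ⟨1, key⟩)

/-- If `T` is ergodic and `∫ f < 0` then a.e. the Birkhoff sums of `f` are bounded above. -/
private lemma birkhoff_bddAbove [IsProbabilityMeasure μ] {T : Ω → Ω} {f : Ω → ℝ}
    (hT : Ergodic T μ) (hfm : Measurable f) (hf : Integrable f μ)
    (hneg : ∫ ω, f ω ∂μ < 0) :
    ∀ᵐ ω ∂μ, ∃ C : ℝ, ∀ n, birkhoffSum T f n ω ≤ C := by
  set B : Set Ω := {ω | ∀ k : ℕ, ∃ n, (k : ℝ) < birkhoffSum T f n ω} with hB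
  have hBm : MeasurableSet B := by
    have : B = ⋂ k : ℕ, ⋃ n : ℕ, {ω | (k : ℝ) < birkhoffSum T f n ω} := by
      ext ω; simp [hB]
    rw [this]
    exact MeasurableSet.iInter fun k => MeasurableSet.iUnion fun n =>
      measurableSet_lt measurable_const
        (birkhoff_measurable hT.toMeasurePreserving.measurable hfm n)
  have hBinv : T ⁻¹' B = B := by
    ext ω
    simp only [Set.mem_preimage, hB, Set.mem_setOf_eq]
    constructor
    · intro h k
      obtain ⟨k', hk'⟩ := exists_nat_ge ((k : ℝ) - f ω)
      obtain ⟨n, hn⟩ := h k'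
      exact ⟨n + 1, by rw [birkhoffSum_succ']; linarith⟩
    · intro h k
      obtain ⟨k', hk'⟩ := exists_nat_ge ((k : ℝ) + f ω)
      obtain ⟨m, hm⟩ := h k'
      rcases m with - | n
      · exfalso
        rw [birkhoffSum_zero] at hm
        exact absurd hm (not_lt.2 (Nat.cast_nonneg k'))
      · rw [birkhoffSum_succ'] at hm
        exact ⟨n, by linarith⟩
  rcases hT.ae_empty_or_univ hBm hBinv with hB0 | hB1
  · have hmu : μ B = 0 := by
      have := measure_congr hB0
      simpa using this
    have hnm : ∀ᵐ ω ∂μ, ω ∉ B := measure_eq_zero_iff_ae_notMem.1 hmu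
    filter_upwards [hnm] with ω hω
    simp only [hB, Set.mem_setOf_eq] at hω
    push_neg at hω
    obtain ⟨k, hk⟩ := hω
    exact ⟨(k : ℝ), hk⟩
  · exfalso
    have hmu : μ Bᶜ = 0 := by
      have := measure_congr hB1
      rw [ae_eq_univ] at hB1
      exact hB1
    have hmem : ∀ᵐ ω ∂μ, ω ∈ B := by
      rw [← compl_compl B]
      exact measure_eq_zero_iff_ae_notMem.1 hmu
    have hae : ∀ᵐ ω ∂μ, ∃ n, 1 ≤ n ∧ 0 ≤ birkhoffSum T f n ω := by
      filter_upwards [hmem] with ω hω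
      obtain ⟨n, hn⟩ := hω 0
      have hn1 : 1 ≤ n := by
        rcases Nat.eq_zero_or_pos n with h | h
        · exfalso; rw [h, birkhoffSum_zero] at hn; simpa using hn
        · exact h
      exact ⟨n, hn1, le_of_lt (by simpa using hn)⟩
    have := integral_nonneg_of_ae hT.toMeasurePreserving hfm hf hae
    linarith

end Aux

set_option maxHeartbeats 1000000 in
/-- **Ergodic series lemma (direct part).**
Let `(α_n, β_n)_{n ≥ 0}` be a stationary ergodic sequence of pairs of nonnegative random
variables, realized as `α_n = α ∘ T^n`, `β_n = β ∘ T^n` for an ergodic measure-preserving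
shift `T`.  If `E[log α_0] < 0` (possibly `-∞`, expressed as
`∫⁻ log⁺ α_0 < ∫⁻ log⁻ α_0`, which forces the positive part to be finite) and
`E[log⁺ β_0] < ∞`, then `∑_{n≥0} α_0 α_1 ⋯ α_{n-1} β_n < ∞` almost surely. -/
theorem ergodic_series_converges
    {Ω : Type*} [MeasurableSpace Ω] {μ : Measure Ω} [IsProbabilityMeasure μ]
    (T : Ω → Ω) (hT : Ergodic T μ)
    (α β : Ω → ℝ) (hα_meas : Measurable α) (hβ_meas : Measurable β)
    (hα_nonneg : ∀ ω, 0 ≤ α ω) (hβ_nonneg : ∀ ω, 0 ≤ β ω)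
    (hlogα : ∫⁻ ω, ENNReal.ofReal (Real.log (α ω)) ∂μ
      < ∫⁻ ω, ENNReal.ofReal (-Real.log (α ω)) ∂μ)
    (hlogβ : ∫⁻ ω, ENNReal.ofReal (Real.log (β ω)) ∂μ < ⊤) :
    ∀ᵐ ω ∂μ, Summable fun n : ℕ =>
      (∏ i ∈ Finset.range n, α (T^[i] ω)) * β (T^[n] ω) := by
  -- Step 1: choose a truncation `g = log (max α c)` with negative finite mean
  set P := ∫⁻ ω, ENNReal.ofReal (Real.log (α ω)) ∂μ with hP
  have hPtop : P ≠ ⊤ := hlogα.ne_top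
  set F : ℕ → Ω → ℝ≥0∞ :=
    fun k ω => ENNReal.ofReal (-Real.log (max (α ω) (Real.exp (-(k : ℝ))))) with hF
  have hFmeas : ∀ k, Measurable (F k) := fun k =>
    ENNReal.measurable_ofReal.comp
      ((Real.measurable_log.comp (hα_meas.max measurable_const)).neg)
  have hFmono : Monotone F := by
    intro k k' hkk ω
    apply ENNReal.ofReal_le_ofReal
    apply neg_le_neg
    apply Real.log_le_log (lt_of_lt_of_le (Real.exp_pos _) (le_max_right _ _))
    exact max_le_max le_rfl (Real.exp_le_exp.2 (neg_le_neg (by exact_mod_cast hkk)))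
  have hsup : ∀ ω, ENNReal.ofReal (-Real.log (α ω)) ≤ ⨆ k, F k ω := by
    intro ω
    rcases lt_or_ge 0 (α ω) with hpos | hle
    · obtain ⟨k, hk⟩ := exists_nat_ge (-Real.log (α ω))
      have h1 : Real.exp (-(k : ℝ)) ≤ α ω := by
        rw [← Real.exp_log hpos]
        exact Real.exp_le_exp.2 (by linarith)
      have h2 : F k ω = ENNReal.ofReal (-Real.log (α ω)) := by
        simp only [hF]
        rw [max_eq_left h1]
      rw [← h2]
      exact le_iSup (fun k => F k ω) k
    · have h0 : α ω = 0 := le_antisymm hle (hα_nonneg ω)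
      simp [h0, Real.log_zero]
  have hkey : P < ⨆ k, ∫⁻ ω, F k ω ∂μ := by
    calc P < ∫⁻ ω, ENNReal.ofReal (-Real.log (α ω)) ∂μ := hlogα
    _ ≤ ∫⁻ ω, ⨆ k, F k ω ∂μ := lintegral_mono hsup
    _ = ⨆ k, ∫⁻ ω, F k ω ∂μ := lintegral_iSup hFmeas hFmono
  obtain ⟨k, hk⟩ := lt_iSup_iff.1 hkey
  set c := Real.exp (-(k : ℝ)) with hc
  have hc0 : 0 < c := Real.exp_pos _
  have hc1 : c ≤ 1 := Real.exp_le_one_iff.2 (neg_nonpos.2 (Nat.cast_nonneg k))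
  set g := fun ω => Real.log (max (α ω) c) with hgdef
  have hg_meas : Measurable g := Real.measurable_log.comp (hα_meas.max measurable_const)
  have hmaxpos : ∀ ω, 0 < max (α ω) c := fun ω => lt_of_lt_of_le hc0 (le_max_right _ _)
  have hgc : ∀ ω, -(g ω) ≤ (k : ℝ) := by
    intro ω
    have h1 : Real.log c ≤ g ω := Real.log_le_log hc0 (le_max_right _ _)
    rw [hc, Real.log_exp] at h1
    linarith
  have hgP : ∫⁻ ω, ENNReal.ofReal (g ω) ∂μ = P := by
    rw [hP]
    apply lintegral_congr
    intro ω
    rcases le_or_gt 1 (α ω) with h1 | h1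
    · simp only [hgdef]
      rw [max_eq_left (le_trans hc1 h1)]
    · have e1 : g ω ≤ 0 := Real.log_nonpos (le_of_lt (hmaxpos ω)) (max_le h1.le hc1)
      have e2 : Real.log (α ω) ≤ 0 := Real.log_nonpos (hα_nonneg ω) h1.le
      rw [ENNReal.ofReal_of_nonpos e1, ENNReal.ofReal_of_nonpos e2]
  have hgQ : ∫⁻ ω, ENNReal.ofReal (-(g ω)) ∂μ = ∫⁻ ω, F k ω ∂μ := rfl
  set Q := ∫⁻ ω, F k ω ∂μ with hQ
  have hQtop : Q ≠ ⊤ := by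
    have hle : Q ≤ ENNReal.ofReal (k : ℝ) := by
      rw [hQ]
      calc ∫⁻ ω, F k ω ∂μ ≤ ∫⁻ _, ENNReal.ofReal (k : ℝ) ∂μ := by
            apply lintegral_mono
            intro ω
            rw [← hgQ] at *
            exact ENNReal.ofReal_le_ofReal (hgc ω)
      _ = ENNReal.ofReal (k : ℝ) := by rw [lintegral_const, measure_univ, mul_one]
    exact ne_top_of_le_ne_top ENNReal.ofReal_ne_top hle
  have hPQ : P < Q := hk
  have hg_int : Integrable g μ := by
    refine ⟨hg_meas.aestronglyMeasurable, ?_⟩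
    rw [hasFiniteIntegral_iff_norm]
    have hpt : ∀ ω, ENNReal.ofReal ‖g ω‖
        ≤ ENNReal.ofReal (g ω) + ENNReal.ofReal (-(g ω)) := by
      intro ω
      rw [Real.norm_eq_abs]
      rcases le_total 0 (g ω) with hsgn | hsgn
      · rw [abs_of_nonneg hsgn]; exact le_self_add
      · rw [abs_of_nonpos hsgn]; exact le_add_self
    calc ∫⁻ ω, ENNReal.ofReal ‖g ω‖ ∂μ
        ≤ ∫⁻ ω, (ENNReal.ofReal (g ω) + ENNReal.ofReal (-(g ω))) ∂μ := lintegral_mono hpt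
      _ = P + Q := by
          rw [lintegral_add_left hg_meas.ennreal_ofReal, hgP, hgQ]
      _ < ⊤ := ENNReal.add_lt_top.2 ⟨hPtop.lt_top, hQtop.lt_top⟩
  have hgneg : ∫ ω, g ω ∂μ < 0 := by
    rw [integral_eq_lintegral_pos_part_sub_lintegral_neg_part hg_int]
    have h1 : (∫⁻ ω, ENNReal.ofReal (g ω) ∂μ) = P := hgP
    have h2 : (∫⁻ ω, ENNReal.ofReal (-(g ω)) ∂μ) = Q := hgQ
    rw [h1, h2]
    have := (ENNReal.toReal_lt_toReal hPtop hQtop).2 hPQ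
    linarith
  -- Step 2: a.e. upper bound for the Birkhoff sums of `g`
  set M := (∫ ω, g ω ∂μ) / 2 with hM
  have hM0 : M < 0 := by rw [hM]; linarith
  set h := fun ω => g ω - M with hh
  have hh_meas : Measurable h := hg_meas.sub measurable_const
  have hh_int : Integrable h μ := hg_int.sub (integrable_const M)
  have hh_neg : ∫ ω, h ω ∂μ < 0 := by
    simp only [hh]
    rw [integral_sub hg_int (integrable_const M), integral_const, probReal_univ,
      one_smul]
    linarith
  have hbdd := birkhoff_bddAbove hT hh_meas hh_int hh_neg
  -- Step 3: Borel–Cantelli for β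
  set ε := -M / 2 with hε
  have hε0 : 0 < ε := by rw [hε]; linarith
  set Y := fun ω => max (Real.log (β ω)) 0 / ε with hY
  have hY_meas : Measurable Y :=
    ((Real.measurable_log.comp hβ_meas).max measurable_const).div_const ε
  have hY_nonneg : 0 ≤ Y := fun ω => div_nonneg (le_max_right _ _) hε0.le
  have hY_int : Integrable Y μ := by
    refine ⟨hY_meas.aestronglyMeasurable, ?_⟩
    rw [hasFiniteIntegral_iff_norm]
    have hpt : ∀ ω, ENNReal.ofReal ‖Y ω‖
        = ENNReal.ofReal ε⁻¹ * ENNReal.ofReal (Real.log (β ω)) := by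
      intro ω
      rw [Real.norm_eq_abs, abs_of_nonneg (hY_nonneg ω)]
      simp only [hY]
      rw [div_eq_inv_mul, ENNReal.ofReal_mul (inv_nonneg.2 hε0.le)]
      congr 1
      rcases le_total 0 (Real.log (β ω)) with hsgn | hsgn
      · rw [max_eq_left hsgn]
      · rw [max_eq_right hsgn, ENNReal.ofReal_of_nonpos hsgn, ENNReal.ofReal_zero]
    calc ∫⁻ ω, ENNReal.ofReal ‖Y ω‖ ∂μ
        = ∫⁻ ω, ENNReal.ofReal ε⁻¹ * ENNReal.ofReal (Real.log (β ω)) ∂μ :=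
          lintegral_congr hpt
      _ = ENNReal.ofReal ε⁻¹ * ∫⁻ ω, ENNReal.ofReal (Real.log (β ω)) ∂μ :=
          lintegral_const_mul _
            (ENNReal.measurable_ofReal.comp (Real.measurable_log.comp hβ_meas))
      _ < ⊤ := ENNReal.mul_lt_top ENNReal.ofReal_lt_top hlogβ
  have htsum : (∑' j : ℕ, μ {ω | Y ω ∈ Set.Ioi (j : ℝ)}) < ⊤ := by
    letI : MeasureSpace Ω := ⟨μ⟩
    haveI : IsProbabilityMeasure (volume : Measure Ω) := ‹IsProbabilityMeasure μ›
    exact ProbabilityTheory.tsum_prob_mem_Ioi_lt_top hY_int hY_nonneg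
  set s : ℕ → Set Ω := fun n => T^[n] ⁻¹' {ω | Real.exp (ε * n) < β ω} with hs
  have hssub : ∀ n, μ (s n) ≤ μ {ω | Y ω ∈ Set.Ioi (n : ℝ)} := by
    intro n
    simp only [hs]
    rw [(hT.toMeasurePreserving.iterate n).measure_preimage
      (measurableSet_lt measurable_const hβ_meas).nullMeasurableSet]
    apply measure_mono
    intro ω hω
    simp only [Set.mem_setOf_eq] at hω ⊢
    have hβpos : 0 < β ω := lt_trans (Real.exp_pos _) hω
    have hl1 : ε * n < Real.log (β ω) := (Real.lt_log_iff_exp_lt hβpos).2 hω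
    have hl2 : ε * n < max (Real.log (β ω)) 0 := lt_of_lt_of_le hl1 (le_max_left _ _)
    rw [Set.mem_Ioi, hY]
    simp only
    rw [lt_div_iff₀ hε0]
    linarith
  have hBC : ∀ᵐ ω ∂μ, ∀ᶠ n in atTop, ω ∉ s n :=
    ae_eventually_notMem (ne_top_of_le_ne_top htsum.ne (ENNReal.tsum_le_tsum hssub))
  -- Step 4: combine
  filter_upwards [hbdd, hBC] with ω hω hβev
  obtain ⟨C, hC⟩ := hω
  obtain ⟨N₀, hN₀⟩ := eventually_atTop.1 hβev
  have hterm_nonneg : ∀ n : ℕ, 0 ≤ (∏ i ∈ Finset.range n, α (T^[i] ω)) * β (T^[n] ω) :=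
    fun n => mul_nonneg (Finset.prod_nonneg fun i _ => hα_nonneg _) (hβ_nonneg _)
  have hSg : ∀ n : ℕ, birkhoffSum T g n ω ≤ n * M + C := by
    intro n
    have h1 := hC n
    have h2 : birkhoffSum T h n ω = birkhoffSum T g n ω - n * M := by
      simp only [birkhoffSum, hh]
      rw [Finset.sum_sub_distrib, Finset.sum_const, Finset.card_range, nsmul_eq_mul]
    linarith
  have hprod : ∀ n : ℕ, (∏ i ∈ Finset.range n, α (T^[i] ω))
      ≤ Real.exp (birkhoffSum T g n ω) := by
    intro n
    have hbs : birkhoffSum T g n ω = ∑ i ∈ Finset.range n, g (T^[i] ω) := rfl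
    rw [hbs, Real.exp_sum]
    refine Finset.prod_le_prod (fun i _ => hα_nonneg _) fun i _ => ?_
    simp only [hgdef]
    rw [Real.exp_log (hmaxpos _)]
    exact le_max_left _ _
  have hbound : ∀ n, N₀ ≤ n →
      (∏ i ∈ Finset.range n, α (T^[i] ω)) * β (T^[n] ω)
        ≤ Real.exp C * Real.exp (M / 2) ^ n := by
    intro n hn
    have hns := hN₀ n hn
    simp only [hs, Set.mem_preimage, Set.mem_setOf_eq] at hns
    have hβn : β (T^[n] ω) ≤ Real.exp (ε * n) := not_lt.1 hns
    have h1 : (∏ i ∈ Finset.range n, α (T^[i] ω)) ≤ Real.exp ((n : ℝ) * M + C) :=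
      le_trans (hprod n) (Real.exp_le_exp.2 (hSg n))
    calc (∏ i ∈ Finset.range n, α (T^[i] ω)) * β (T^[n] ω)
        ≤ Real.exp ((n : ℝ) * M + C) * Real.exp (ε * n) :=
          mul_le_mul h1 hβn (hβ_nonneg _) (Real.exp_nonneg _)
      _ = Real.exp C * Real.exp (M / 2) ^ n := by
          rw [← Real.exp_nat_mul, ← Real.exp_add, ← Real.exp_add]
          congr 1
          rw [hε]
          ring
  refine (summable_nat_add_iff N₀).1 ?_
  refine Summable.of_nonneg_of_le (fun n => hterm_nonneg _)
    (fun n => hbound (n + N₀) (by omega)) ?_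
  refine (summable_nat_add_iff
    (f := fun n => Real.exp C * Real.exp (M / 2) ^ n) N₀).2 ?_
  refine Summable.mul_left _ ?_
  refine summable_geometric_of_lt_one (Real.exp_nonneg _) ?_
  rw [Real.exp_lt_one_iff]
  linarith
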